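/- (Main prediction error bound) Let x be a feature vector, M ≥ 1 neighborhoods B(x,r₁),…,B(x,r_M) each containing at least 2 samples of [0,1]-valued residuals, m* the index minimizing the true residual variance Var_m with standard-deviation gap Δ > 0 to the second best, and m̂ the index minimizing the sample variance. Let ĉ be the sample mean of residuals in B(x,r_{m̂}) and c the true residual of the student, distributed with mean μ_{m*} and variance Var_{m*} conditional on the neighborhood B(x,r_{m*}). Assume (i) P[|c − μ_{m*}| ≥ ε/2] ≤ 4Var_{m*}/ε², (ii) for each m the sample mean over B(x,r_m) satisfies the Hoeffding bound, and (iii) each sample standard deviation satisfies the empirical Bernstein bound. Then P[|c − ĉ| ≥ ε] ≤ 4Var_{m*}/ε² + 2·exp(−ε²·min_m |B(x,r_m)|/2) + 2M·exp(−Δ²·min_m (|B(x,r_m)|−1)/8). -/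

import Mathlib

open MeasureTheory ProbabilityTheory Real

/-- Main prediction error bound (Theorem of the paper): with `M ≥ 1` neighborhoods of
sizes `nₘ ≥ 2`, true residual means `μₘ` and variances `Vₘ` with unique
standard-deviation minimizer `m*` and gap `Δ > 0`, sample means `μ̂ₘ` satisfying the
Hoeffding bound, sample variances `V̂ₘ` satisfying the empirical Bernstein bound, `m̂`
the index minimizing the sample variance, and prediction `ĉ ω = μ̂_{m̂ ω} ω`, the true
residual `c` (which satisfies the Chebyshev bound around `μ_{m*}`) is predicted with
`P[|c − ĉ| ≥ ε] ≤ 4 V_{m*}/ε² + 2 exp(−ε² minₘ nₘ / 2) + 2M exp(−Δ² minₘ(nₘ−1)/8)`. -/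
theorem main_prediction_error_bound {Ω : Type*} [MeasureSpace Ω]
    [IsProbabilityMeasure (ℙ : Measure Ω)] {M : ℕ} (hM : 1 ≤ M)
    (n : Fin M → ℕ) (hn : ∀ m, 2 ≤ n m)
    (μ : Fin M → ℝ) (V : Fin M → ℝ) (hV : ∀ m, 0 ≤ V m)
    (mstar : Fin M) (hmin : ∀ m, m ≠ mstar → Real.sqrt (V mstar) < Real.sqrt (V m))
    {Δ : ℝ} (hΔpos : 0 < Δ)
    (hΔ : ∀ m, m ≠ mstar → Δ ≤ Real.sqrt (V m) - Real.sqrt (V mstar))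
    (c : Ω → ℝ) (muhat : Fin M → Ω → ℝ) (Vhat : Fin M → Ω → ℝ)
    (mhat : Ω → Fin M) (hmhat : ∀ ω m, Vhat (mhat ω) ω ≤ Vhat m ω)
    (chat : Ω → ℝ) (hchat : ∀ ω, chat ω = muhat (mhat ω) ω)
    {ε : ℝ} (hε : 0 < ε)
    (hcheb : (ℙ {ω | ε / 2 ≤ |c ω - μ mstar|}).toReal ≤ 4 * V mstar / ε ^ 2)
    (hhoeff : ∀ m, (ℙ {ω | ε / 2 ≤ |muhat m ω - μ m|}).toReal ≤
      2 * exp (-(ε ^ 2 / 2) * (n m : ℝ)))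
    (hbernstein : ∀ m, ∀ t : ℝ, 0 < t →
      (ℙ {ω | t ≤ |Real.sqrt (Vhat m ω) - Real.sqrt (V m)|}).toReal ≤
        2 * exp (-(((n m : ℝ) - 1) / 2) * t ^ 2)) :
    (ℙ {ω | ε ≤ |c ω - chat ω|}).toReal ≤
      4 * V mstar / ε ^ 2 + 2 * exp (-ε ^ 2 * (⨅ m, (n m : ℝ)) / 2) +
        2 * M * exp (-Δ ^ 2 * (⨅ m, ((n m : ℝ) - 1)) / 8) := by
  classical
  haveI : Nonempty (Fin M) := ⟨⟨0, hM⟩⟩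
  set A := {ω : Ω | ε / 2 ≤ |c ω - μ mstar|} with hA
  set B := {ω : Ω | ε / 2 ≤ |muhat mstar ω - μ mstar|} with hB
  set D := fun m : Fin M => {ω : Ω | Δ / 2 ≤ |Real.sqrt (Vhat m ω) - Real.sqrt (V m)|} with hD
  set C := ⋃ m, D m with hC
  have hsub : {ω : Ω | ε ≤ |c ω - chat ω|} ⊆ A ∪ B ∪ C := by
    intro ω hω
    by_cases hm : mhat ω = mstar
    · rcases le_or_gt (ε / 2) |c ω - μ mstar| with h | h
      · exact Or.inl (Or.inl h)
      · left; right
        have hce : chat ω = muhat mstar ω := by rw [hchat, hm]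
        have htri : |c ω - chat ω| ≤ |c ω - μ mstar| + |muhat mstar ω - μ mstar| := by
          rw [hce]
          calc |c ω - muhat mstar ω|
              = |(c ω - μ mstar) + -(muhat mstar ω - μ mstar)| := by ring_nf
            _ ≤ |c ω - μ mstar| + |-(muhat mstar ω - μ mstar)| := abs_add_le _ _
            _ = |c ω - μ mstar| + |muhat mstar ω - μ mstar| := by rw [abs_neg]
        have hω' : ε ≤ |c ω - chat ω| := hω
        simp only [hB, Set.mem_setOf_eq]
        linarith
    · right
      have h1 : Real.sqrt (Vhat (mhat ω) ω) ≤ Real.sqrt (Vhat mstar ω) :=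
        Real.sqrt_le_sqrt (hmhat ω mstar)
      have h2 : Δ ≤ Real.sqrt (V (mhat ω)) - Real.sqrt (V mstar) := hΔ _ hm
      have key : Δ / 2 ≤ |Real.sqrt (Vhat (mhat ω) ω) - Real.sqrt (V (mhat ω))| ∨
          Δ / 2 ≤ |Real.sqrt (Vhat mstar ω) - Real.sqrt (V mstar)| := by
        by_contra hc
        push_neg at hc
        have hc1 := abs_lt.mp hc.1
        have hc2 := abs_lt.mp hc.2
        linarith [hc1.1, hc2.2]
      rcases key with h | h
      · exact Set.mem_iUnion.mpr ⟨mhat ω, h⟩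
      · exact Set.mem_iUnion.mpr ⟨mstar, h⟩
  have hABC : ℙ {ω : Ω | ε ≤ |c ω - chat ω|} ≤ ℙ A + ℙ B + ℙ C :=
    (measure_mono hsub).trans ((measure_union_le _ _).trans
      (add_le_add_left (measure_union_le _ _) _))
  have hne : ℙ A + ℙ B + ℙ C ≠ ⊤ := by
    simp [ENNReal.add_ne_top, measure_ne_top]
  have h1 : (ℙ {ω : Ω | ε ≤ |c ω - chat ω|}).toReal ≤
      (ℙ A).toReal + (ℙ B).toReal + (ℙ C).toReal := by
    have := ENNReal.toReal_mono hne hABC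
    rwa [ENNReal.toReal_add (by simp [ENNReal.add_ne_top, measure_ne_top]) (measure_ne_top _ _),
      ENNReal.toReal_add (measure_ne_top _ _) (measure_ne_top _ _)] at this
  have hbdd : BddBelow (Set.range fun m : Fin M => (n m : ℝ)) := Finite.bddBelow_range _
  have hbdd' : BddBelow (Set.range fun m : Fin M => ((n m : ℝ) - 1)) := Finite.bddBelow_range _
  have hBbound : (ℙ B).toReal ≤ 2 * exp (-ε ^ 2 * (⨅ m, (n m : ℝ)) / 2) := by
    refine (hhoeff mstar).trans ?_
    have hle : (⨅ m, (n m : ℝ)) ≤ (n mstar : ℝ) := ciInf_le hbdd mstar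
    have : -(ε ^ 2 / 2) * (n mstar : ℝ) ≤ -ε ^ 2 * (⨅ m, (n m : ℝ)) / 2 := by nlinarith
    have := Real.exp_le_exp.mpr this
    linarith
  have hCbound : (ℙ C).toReal ≤ 2 * M * exp (-Δ ^ 2 * (⨅ m, ((n m : ℝ) - 1)) / 8) := by
    have hCle : ℙ C ≤ ∑ m, ℙ (D m) := (measure_iUnion_le _).trans_eq (tsum_fintype _)
    have hsne : (∑ m, ℙ (D m)) ≠ ⊤ := by
      refine ENNReal.sum_ne_top.mpr fun m _ => measure_ne_top _ _
    have h2 : (ℙ C).toReal ≤ ∑ m, (ℙ (D m)).toReal := by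
      have := ENNReal.toReal_mono hsne hCle
      rwa [ENNReal.toReal_sum (fun m _ => measure_ne_top _ _)] at this
    refine h2.trans ?_
    have hterm : ∀ m, (ℙ (D m)).toReal ≤ 2 * exp (-Δ ^ 2 * (⨅ m, ((n m : ℝ) - 1)) / 8) := by
      intro m
      refine (hbernstein m (Δ / 2) (by linarith)).trans ?_
      have hle : (⨅ m, ((n m : ℝ) - 1)) ≤ ((n m : ℝ) - 1) := ciInf_le hbdd' m
      have : -(((n m : ℝ) - 1) / 2) * (Δ / 2) ^ 2 ≤ -Δ ^ 2 * (⨅ m, ((n m : ℝ) - 1)) / 8 := by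
        nlinarith
      have := Real.exp_le_exp.mpr this
      linarith
    calc ∑ m, (ℙ (D m)).toReal
        ≤ ∑ _m : Fin M, 2 * exp (-Δ ^ 2 * (⨅ m, ((n m : ℝ) - 1)) / 8) :=
          Finset.sum_le_sum fun m _ => hterm m
      _ = 2 * M * exp (-Δ ^ 2 * (⨅ m, ((n m : ℝ) - 1)) / 8) := by
          simp [Finset.sum_const, Finset.card_univ]; ring
  linarith [h1, hcheb, hBbound, hCbound]
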